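/- For every nonempty finite sequence I = (a_1,…,a_n) of positive integers, the following identity holds in 𝓕₂*: Σ_{I' ∈ C(I^{-1})} S_{I'} = Σ_{β ∈ P(I)} S_{β(1)} · S_{β(2)} ⋯ S_{β(l(β))}, where I^{-1} is the reversal of I. (Both sides equal the conjugation χ(S_I) of the mod 2 dual Leibniz–Hopf algebra.) -/

import Mathlib

/-- The overlapping shuffle product of two finite sequences, as a multiset
(counting multiplicities). -/
def osp : List ℕ → List ℕ → Multiset (List ℕ)
  | A, [] => {A}
  | [], B => {B}
  | a :: A, b :: B =>
      ((osp A (b :: B)).map (a :: ·)) +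
      ((osp (a :: A) B).map (b :: ·)) +
      ((osp A B).map ((a + b) :: ·))
termination_by A B => A.length + B.length
decreasing_by all_goals (simp only [List.length_cons]; omega)

/-- The underlying free module over `ZMod 2` on the set of finite sequences
(this carries the mod 2 dual Leibniz--Hopf algebra `𝓕₂*`). -/
abbrev F2D : Type := (List ℕ) →₀ ZMod 2

/-- The basis element `S_I`. -/
noncomputable def sElem (I : List ℕ) : F2D := Finsupp.single I 1

/-- The element of `𝓕₂*` associated to a multiset of sequences, keeping
multiplicities mod 2. -/
noncomputable def ofMS (m : Multiset (List ℕ)) : F2D := (m.map sElem).sum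

/-- The bilinear product of `𝓕₂*`: on basis elements,
`S_I · S_J = Σ_K (multiplicity of K in osp I J mod 2) • S_K`. -/
noncomputable def fmul (x y : F2D) : F2D :=
  x.sum fun I a => y.sum fun J b => (a * b) • ofMS (osp I J)

/-- Product of a list of elements of `𝓕₂*` (with `S_{()}` the unit). -/
noncomputable def fprod : List F2D → F2D
  | [] => sElem []
  | x :: xs => fmul x (fprod xs)

/-- The coarsening set `C(I)`: all sequences obtained from `I` by summing
consecutive blocks of entries.  (`C([]) = {[]}` by convention.) -/
def coars : List ℕ → Finset (List ℕ)
  | [] => {[]}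
  | [i] => {[i]}
  | i :: j :: rest =>
      ((coars (j :: rest)).image (i :: ·)) ∪
      ((coars (j :: rest)).image (fun I' => (i + I'.headD 0) :: I'.tail))

/-- The set of ordered block partitions of a sequence: lists of consecutive
nonempty blocks whose concatenation is the given sequence. -/
def obp : List ℕ → Finset (List (List ℕ))
  | [] => {[]}
  | a :: rest =>
      (Finset.range (rest.length + 1)).attach.biUnion fun k =>
        (obp (rest.drop k.1)).image fun β => (a :: rest.take k.1) :: β
termination_by l => l.length
decreasing_by simp

lemma osp_nil_right (A : List ℕ) : osp A [] = {A} := by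
  cases A <;> simp [osp]

lemma osp_nil_left (B : List ℕ) : osp [] B = {B} := by
  cases B <;> simp [osp]

lemma osp_cons_cons (a b : ℕ) (A B : List ℕ) :
    osp (a :: A) (b :: B) =
      ((osp A (b :: B)).map (a :: ·)) +
      ((osp (a :: A) B).map (b :: ·)) +
      ((osp A B).map ((a + b) :: ·)) := by
  rw [osp]

lemma osp_back (a b : ℕ) : ∀ (n : ℕ) (X Y : List ℕ), X.length + Y.length ≤ n →
    osp (X ++ [a]) (Y ++ [b]) =
      ((osp X (Y ++ [b])).map (· ++ [a])) +
      ((osp (X ++ [a]) Y).map (· ++ [b])) +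
      ((osp X Y).map (· ++ [a + b])) := by
  intro n
  induction n with
  | zero =>
    rintro (⟨⟩ | ⟨x, X⟩) (⟨⟩ | ⟨y, Y⟩) hlen
    · simp only [List.nil_append, osp_cons_cons, osp_nil_left, osp_nil_right]
      simp [add_comm]
    all_goals simp at hlen
  | succ n ih =>
    rintro (⟨⟩ | ⟨x, X⟩) (⟨⟩ | ⟨y, Y⟩) hlen
    · simp only [List.nil_append, osp_cons_cons, osp_nil_left, osp_nil_right]
      simp [add_comm]
    · -- X = [], Y = y :: Y
      have h1 := ih [] Y (by simp at hlen ⊢; omega)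
      simp only [List.nil_append, osp_nil_left] at h1
      simp only [List.nil_append, List.cons_append, osp_cons_cons, osp_nil_left, h1]
      simp only [Multiset.map_add, Multiset.map_map, Function.comp,
        Multiset.map_singleton, List.cons_append, List.append_assoc,
        List.singleton_append]
      abel
    · -- X = x :: X, Y = []
      have h1 := ih X [] (by simp at hlen ⊢; omega)
      simp only [List.nil_append, osp_nil_right] at h1
      simp only [List.nil_append, List.cons_append, osp_cons_cons, osp_nil_right, h1]
      simp only [Multiset.map_add, Multiset.map_map, Function.comp,
        Multiset.map_singleton, List.cons_append, List.append_assoc,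
        List.singleton_append]
      abel
    · -- general
      have h1 := ih X (y :: Y) (by simp at hlen ⊢; omega)
      have h2 := ih (x :: X) Y (by simp at hlen ⊢; omega)
      have h3 := ih X Y (by simp at hlen ⊢; omega)
      simp only [List.cons_append] at h1 h2 h3
      simp only [List.cons_append, osp_cons_cons, h1, h2, h3]
      simp only [Multiset.map_add, Multiset.map_map, Function.comp,
        List.cons_append]
      abel

lemma osp_reverse : ∀ (n : ℕ) (A B : List ℕ), A.length + B.length ≤ n →
    (osp A B).map List.reverse = osp A.reverse B.reverse := by
  intro n
  induction n with
  | zero =>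
    rintro (⟨⟩ | ⟨x, X⟩) (⟨⟩ | ⟨y, Y⟩) hlen
    · simp [osp_nil_left]
    all_goals simp at hlen
  | succ n ih =>
    rintro (⟨⟩ | ⟨a, A⟩) (⟨⟩ | ⟨b, B⟩) hlen
    · simp [osp_nil_left]
    · simp [osp_nil_left]
    · simp [osp_nil_right]
    · have h1 := ih A (b :: B) (by simp at hlen ⊢; omega)
      have h2 := ih (a :: A) B (by simp at hlen ⊢; omega)
      have h3 := ih A B (by simp at hlen ⊢; omega)
      simp only [osp_cons_cons, Multiset.map_add, Multiset.map_map]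
      rw [show ((List.reverse ∘ (a :: ·)) = (fun l => l ++ [a]) ∘ List.reverse) from by
        funext l; simp,
        show ((List.reverse ∘ (b :: ·)) = (fun l => l ++ [b]) ∘ List.reverse) from by
        funext l; simp,
        show ((List.reverse ∘ ((a + b) :: ·)) = (fun l => l ++ [a + b]) ∘ List.reverse) from by
        funext l; simp]
      rw [← Multiset.map_map, ← Multiset.map_map, ← Multiset.map_map, h1, h2, h3]
      simp only [List.reverse_cons]
      rw [osp_back a b (A.length + B.length) A.reverse B.reverse (by simp)]

lemma coars_cons (a : ℕ) (L : List ℕ) (h : L ≠ []) :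
    coars (a :: L) = ((coars L).image (a :: ·)) ∪
      ((coars L).image (fun I' => (a + I'.headD 0) :: I'.tail)) := by
  cases L with
  | nil => exact absurd rfl h
  | cons j rest => rw [coars]

lemma coars_ne_nil : ∀ (L : List ℕ), L ≠ [] → ∀ J ∈ coars L, J ≠ [] := by
  intro L
  induction L using coars.induct with
  | case1 => intro h; exact absurd rfl h
  | case2 i => intro _ J hJ; simp [coars] at hJ; simp [hJ]
  | case3 i j rest ih =>
    intro _ J hJ
    rw [coars] at hJ
    simp only [Finset.mem_union, Finset.mem_image] at hJ
    rcases hJ with ⟨J', _, rfl⟩ | ⟨J', _, rfl⟩ <;> simp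

lemma coars_pos : ∀ (L : List ℕ), (∀ i ∈ L, 0 < i) → ∀ J ∈ coars L, ∀ x ∈ J, 0 < x := by
  intro L
  induction L using coars.induct with
  | case1 => intro _ J hJ; simp [coars] at hJ; simp [hJ]
  | case2 i => intro h J hJ; simp [coars] at hJ; subst hJ; simpa using h i (by simp)
  | case3 i j rest ih =>
    intro h J hJ
    rw [coars] at hJ
    simp only [Finset.mem_union, Finset.mem_image] at hJ
    have hpos' : ∀ x ∈ j :: rest, 0 < x := fun x hx => h x (List.mem_cons_of_mem _ hx)
    have hi : 0 < i := h i (by simp)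
    rcases hJ with ⟨J', hJ', rfl⟩ | ⟨J', hJ', rfl⟩
    · intro x hx
      rcases List.mem_cons.1 hx with rfl | hx
      · exact hi
      · exact ih hpos' J' hJ' x hx
    · intro x hx
      rcases List.mem_cons.1 hx with rfl | hx
      · omega
      · exact ih hpos' J' hJ' x (List.mem_of_mem_tail hx)

/-- add `x` to the last entry of a list -/
def bump (x : ℕ) (J : List ℕ) : List ℕ := J.dropLast ++ [J.getLastD 0 + x]

lemma coars_append (x : ℕ) : ∀ (L : List ℕ), L ≠ [] →
    coars (L ++ [x]) = ((coars L).image (· ++ [x])) ∪ ((coars L).image (bump x)) := by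
  intro L
  induction L using coars.induct with
  | case1 => intro h; exact absurd rfl h
  | case2 i =>
    intro _
    show coars [i, x] = _
    rw [coars]
    simp [coars, bump]
  | case3 i j rest ih =>
    intro _
    have hC := coars_ne_nil (j :: rest) (by simp)
    show coars (i :: j :: (rest ++ [x])) = _
    rw [coars_cons i (j :: (rest ++ [x])) (by simp),
        show j :: (rest ++ [x]) = (j :: rest) ++ [x] from rfl,
        ih (by simp), coars_cons i (j :: rest) (by simp)]
    rw [Finset.image_union, Finset.image_union, Finset.image_union, Finset.image_union]
    rw [Finset.image_image, Finset.image_image, Finset.image_image, Finset.image_image,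
        Finset.image_image, Finset.image_image, Finset.image_image, Finset.image_image]
    have e1 : Finset.image ((i :: ·) ∘ (· ++ [x])) (coars (j :: rest)) =
        Finset.image ((· ++ [x]) ∘ (i :: ·)) (coars (j :: rest)) := rfl
    have e2 : Finset.image ((i :: ·) ∘ bump x) (coars (j :: rest)) =
        Finset.image (bump x ∘ (i :: ·)) (coars (j :: rest)) := by
      apply Finset.image_congr
      intro J hJ
      have hJne := hC J hJ
      cases J with
      | nil => exact absurd rfl hJne
      | cons h t => simp [bump, Function.comp]
    have e3 : Finset.image ((fun I' => (i + I'.headD 0) :: I'.tail) ∘ (· ++ [x]))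
          (coars (j :: rest)) =
        Finset.image ((· ++ [x]) ∘ (fun I' => (i + I'.headD 0) :: I'.tail))
          (coars (j :: rest)) := by
      apply Finset.image_congr
      intro J hJ
      have hJne := hC J hJ
      cases J with
      | nil => exact absurd rfl hJne
      | cons h t => simp [Function.comp]
    have e4 : Finset.image ((fun I' => (i + I'.headD 0) :: I'.tail) ∘ bump x)
          (coars (j :: rest)) =
        Finset.image (bump x ∘ (fun I' => (i + I'.headD 0) :: I'.tail))
          (coars (j :: rest)) := by
      apply Finset.image_congr
      intro J hJ
      have hJne := hC J hJ
      cases J with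
      | nil => exact absurd rfl hJne
      | cons h t =>
        cases t with
        | nil => simp [bump, Function.comp, Nat.add_assoc]
        | cons h2 t2 => simp [bump, Function.comp]
    rw [e1, e2, e3, e4]
    ext K
    simp only [Finset.mem_union]
    tauto

lemma coars_reverse : ∀ (L : List ℕ),
    coars L.reverse = (coars L).image List.reverse := by
  intro L
  induction L using coars.induct with
  | case1 => simp [coars]
  | case2 i => simp [coars]
  | case3 i j rest ih =>
    have hC := coars_ne_nil (j :: rest) (by simp)
    rw [show (i :: j :: rest).reverse = (j :: rest).reverse ++ [i] by simp,
        coars_append i _ (by simp), ih, coars_cons i (j :: rest) (by simp),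
        Finset.image_union, Finset.image_image, Finset.image_image,
        Finset.image_image, Finset.image_image]
    congr 1
    · apply Finset.image_congr
      intro J hJ
      simp [Function.comp]
    · apply Finset.image_congr
      intro J hJ
      have hJne := hC J hJ
      cases J with
      | nil => exact absurd rfl hJne
      | cons h t => simp [bump, Function.comp, Nat.add_comm]

lemma ofMS_add (m n : Multiset (List ℕ)) : ofMS (m + n) = ofMS m + ofMS n := by
  simp [ofMS]

lemma ofMS_singleton (A : List ℕ) : ofMS {A} = sElem A := by
  simp [ofMS]

lemma fmul_sElem_sElem (A B : List ℕ) :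
    fmul (sElem A) (sElem B) = ofMS (osp A B) := by
  rw [fmul]
  unfold sElem
  rw [Finsupp.sum_single_index (by simp [Finsupp.sum])]
  rw [Finsupp.sum_single_index (by simp)]
  simp

lemma fmul_zero_right (x : F2D) : fmul x 0 = 0 := by
  simp [fmul]

lemma fmul_add_right (x y z : F2D) : fmul x (y + z) = fmul x y + fmul x z := by
  rw [fmul, fmul, fmul]
  rw [← Finsupp.sum_add]
  apply Finsupp.sum_congr
  intro I hI
  rw [Finsupp.sum_add_index]
  · simp
  · intro J hJ b c
    rw [mul_add, add_smul]

lemma fmul_sum_right {α : Type*} (x : F2D) (s : Finset α) (f : α → F2D) :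
    fmul x (∑ a ∈ s, f a) = ∑ a ∈ s, fmul x (f a) := by
  classical
  induction s using Finset.induction with
  | empty => simp [fmul_zero_right]
  | insert a s h ih => rw [Finset.sum_insert h, Finset.sum_insert h, fmul_add_right, ih]

lemma fmul_one_left (y : F2D) : fmul (sElem []) y = y := by
  rw [fmul, sElem, Finsupp.sum_single_index (by simp [Finsupp.sum])]
  have h : (fun J b => ((1 : ZMod 2) * b) • ofMS (osp [] J)) =
      fun J (b : ZMod 2) => Finsupp.single J b := by
    funext J b
    rw [osp_nil_left, ofMS_singleton, one_mul, sElem, Finsupp.smul_single,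
      smul_eq_mul, mul_one]
  rw [h, Finsupp.sum_single]

lemma char_two (x : F2D) : x + x = 0 := by
  have : x + x = (2 : ZMod 2) • x := by rw [two_smul]
  rw [this, show (2 : ZMod 2) = 0 from rfl, zero_smul]

noncomputable def rv : F2D →+ F2D := Finsupp.mapDomain.addMonoidHom List.reverse

lemma rv_injective : Function.Injective rv :=
  Finsupp.mapDomain_injective List.reverse_injective

lemma rv_sElem (I : List ℕ) : rv (sElem I) = sElem I.reverse := by
  simp [rv, sElem, Finsupp.mapDomain.addMonoidHom_apply, Finsupp.mapDomain_single]

lemma rv_ofMS (m : Multiset (List ℕ)) :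
    rv (ofMS m) = ofMS (m.map List.reverse) := by
  rw [ofMS, ofMS, map_multiset_sum, Multiset.map_map, Multiset.map_map]
  congr 1
  apply Multiset.map_congr rfl
  intro x _
  exact rv_sElem x

lemma headD_cons_tail (J : List ℕ) (h : J ≠ []) : J.headD 0 :: J.tail = J := by
  cases J with
  | nil => exact absurd rfl h
  | cons a t => rfl

lemma drop_eq_getD_cons {I : List ℕ} {j : ℕ} (h : j < I.length) :
    I.drop j = I.getD j 0 :: I.drop (j + 1) := by
  rw [List.drop_eq_getElem_cons h, List.getD_eq_getElem _ _ h]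

lemma take_succ_reverse {I : List ℕ} {j : ℕ} (h : j < I.length) :
    (I.take (j + 1)).reverse = I.getD j 0 :: (I.take j).reverse := by
  rw [List.take_succ, List.getD_eq_getElem _ _ h]
  simp [List.getElem?_eq_getElem h]

lemma headD_mem {J : List ℕ} (h : J ≠ []) : J.headD 0 ∈ J := by
  cases J with
  | nil => exact absurd rfl h
  | cons a t => simp

noncomputable def uF (I : List ℕ) (j : ℕ) : F2D :=
  ∑ J ∈ coars (I.drop j), ofMS (osp (I.take j).reverse J)

noncomputable def vF (I : List ℕ) (j : ℕ) : F2D :=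
  ∑ J ∈ (coars (I.drop j)).filter (· ≠ ([] : List ℕ)),
    ofMS ((osp (I.take j).reverse J.tail).map (J.headD 0 :: ·))

noncomputable def wF (I : List ℕ) (j : ℕ) : F2D :=
  (∑ J ∈ coars (I.drop j),
      ofMS ((osp (I.take (j - 1)).reverse J).map (I.getD (j - 1) 0 :: ·)))
  + (∑ J ∈ (coars (I.drop j)).filter (· ≠ ([] : List ℕ)),
      ofMS ((osp (I.take (j - 1)).reverse J.tail).map
        ((I.getD (j - 1) 0 + J.headD 0) :: ·)))

lemma claim0 (I : List ℕ) (hI : I ≠ []) : uF I 0 = vF I 0 := by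
  rw [uF, vF]
  simp only [List.take_zero, List.drop_zero, List.reverse_nil]
  rw [Finset.filter_true_of_mem (fun J hJ => coars_ne_nil I hI J hJ)]
  apply Finset.sum_congr rfl
  intro J hJ
  have hJne := coars_ne_nil I hI J hJ
  rw [osp_nil_left, osp_nil_left, Multiset.map_singleton, headD_cons_tail J hJne]

lemma claim1 (I : List ℕ) (j : ℕ) (hj : j < I.length) :
    uF I (j + 1) = wF I (j + 1) + vF I (j + 1) := by
  rw [uF, vF, wF]
  simp only [Nat.add_sub_cancel]
  have hP := take_succ_reverse hj
  have split : ∀ J ∈ coars (I.drop (j + 1)),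
      ofMS (osp (I.take (j + 1)).reverse J) =
        ofMS ((osp (I.take j).reverse J).map (I.getD j 0 :: ·)) +
        ((if J ≠ [] then
          ofMS ((osp (I.take (j + 1)).reverse J.tail).map (J.headD 0 :: ·)) else 0) +
        (if J ≠ [] then
          ofMS ((osp (I.take j).reverse J.tail).map ((I.getD j 0 + J.headD 0) :: ·))
          else 0)) := by
    intro J _
    rw [hP]
    cases J with
    | nil => simp [osp_nil_right]
    | cons h t =>
      rw [osp_cons_cons, ofMS_add, ofMS_add]
      simp only [ne_eq, reduceCtorEq, not_false_eq_true, if_true, List.headD_cons,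
        List.tail_cons]
      rw [add_assoc]
  rw [Finset.sum_congr rfl split, Finset.sum_add_distrib, Finset.sum_add_distrib,
    ← Finset.sum_filter, ← Finset.sum_filter]
  abel

lemma claim2 (I : List ℕ) (hpos : ∀ i ∈ I, 0 < i) (j : ℕ) (hj : j < I.length) :
    vF I j = wF I (j + 1) := by
  rw [vF, wF]
  simp only [Nat.add_sub_cancel]
  have hd : I.drop j = I.getD j 0 :: I.drop (j + 1) := drop_eq_getD_cons hj
  rw [hd]
  rw [Finset.filter_true_of_mem (fun J hJ => coars_ne_nil _ (by simp) J hJ)]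
  rcases eq_or_ne (I.drop (j + 1)) [] with hL | hL
  · rw [hL]
    rw [show coars [I.getD j 0] = {[I.getD j 0]} from by rw [coars],
        show coars ([] : List ℕ) = {[]} from by rw [coars]]
    simp [osp_nil_right, Finset.filter_singleton]
  · rw [coars_cons _ _ hL]
    have hCpos : ∀ J ∈ coars (I.drop (j + 1)), 0 < J.headD 0 := by
      intro J hJ
      exact coars_pos _ (fun i hi => hpos i (List.mem_of_mem_drop hi)) J hJ _
        (headD_mem (coars_ne_nil _ hL J hJ))
    have hCne := coars_ne_nil _ hL
    rw [Finset.sum_union ?disj, Finset.sum_image ?inj1, Finset.sum_image ?inj2]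
    case disj =>
      rw [Finset.disjoint_left]
      rintro x hx1 hx2
      obtain ⟨J1, hJ1, rfl⟩ := Finset.mem_image.1 hx1
      obtain ⟨J2, hJ2, heq⟩ := Finset.mem_image.1 hx2
      have := hCpos J2 hJ2
      rw [List.cons.injEq] at heq
      omega
    case inj1 =>
      intro x _ y _ h
      injection h
    case inj2 =>
      intro x hx y hy h
      rw [List.cons.injEq] at h
      have hx' := headD_cons_tail x (hCne x hx)
      have hy' := headD_cons_tail y (hCne y hy)
      rw [← hx', ← hy', h.2]
      congr 1
      omega
    rw [Finset.filter_true_of_mem (fun J hJ => hCne J hJ)]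
    refine congrArg₂ (· + ·) (Finset.sum_congr rfl fun J _ => by simp)
      (Finset.sum_congr rfl fun J _ => by simp)

lemma claim3 (I : List ℕ) : vF I I.length = 0 := by
  rw [vF, List.drop_length, show coars ([] : List ℕ) = {[]} from by rw [coars]]
  simp [Finset.filter_singleton]

lemma keyLemma (I : List ℕ) (hI : I ≠ []) (hpos : ∀ i ∈ I, 0 < i) :
    ∑ j ∈ Finset.range (I.length + 1), uF I j = 0 := by
  rw [Finset.sum_range_succ']
  have h1 : ∀ j ∈ Finset.range I.length, uF I (j + 1) = wF I (j + 1) + vF I (j + 1) :=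
    fun j hj => claim1 I j (Finset.mem_range.1 hj)
  rw [Finset.sum_congr rfl h1, Finset.sum_add_distrib, claim0 I hI]
  have h2 : ∑ j ∈ Finset.range I.length, vF I (j + 1) + vF I 0 =
      ∑ j ∈ Finset.range I.length, wF I (j + 1) := by
    rw [← Finset.sum_range_succ', Finset.sum_range_succ, claim3]
    rw [add_zero]
    exact Finset.sum_congr rfl fun j hj => claim2 I hpos j (Finset.mem_range.1 hj)
  rw [add_assoc, h2, char_two]

lemma keyLemma' (I : List ℕ) (hI : I ≠ []) (hpos : ∀ i ∈ I, 0 < i) :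
    ∑ j ∈ Finset.range (I.length + 1), ∑ J ∈ coars (I.drop j).reverse,
      ofMS (osp (I.take j) J) = 0 := by
  apply rv_injective
  rw [map_zero, map_sum]
  have h : ∀ j ∈ Finset.range (I.length + 1),
      rv (∑ J ∈ coars (I.drop j).reverse, ofMS (osp (I.take j) J)) = uF I j := by
    intro j _
    rw [map_sum, coars_reverse (I.drop j),
      Finset.sum_image (fun x _ y _ h => List.reverse_injective h), uF]
    apply Finset.sum_congr rfl
    intro J hJ
    rw [rv_ofMS,
      osp_reverse ((I.take j).length + J.reverse.length) (I.take j) J.reverse le_rfl,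
      List.reverse_reverse]
  rw [Finset.sum_congr rfl h, keyLemma I hI hpos]

lemma base_case : ∑ I' ∈ coars ([] : List ℕ).reverse, sElem I' =
    ∑ β ∈ obp ([] : List ℕ), fprod (β.map sElem) := by
  rw [List.reverse_nil, show coars ([] : List ℕ) = {[]} from by rw [coars],
    show obp ([] : List ℕ) = {[]} from by rw [obp]]
  simp [fprod]

lemma mainAux : ∀ (n : ℕ) (I : List ℕ), I.length ≤ n → (∀ i ∈ I, 0 < i) →
    ∑ I' ∈ coars I.reverse, sElem I' = ∑ β ∈ obp I, fprod (β.map sElem) := by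
  intro n
  induction n with
  | zero =>
    intro I hlen _
    rw [List.eq_nil_of_length_eq_zero (Nat.le_zero.1 hlen)]
    exact base_case
  | succ n ih =>
    intro I hlen hpos
    cases I with
    | nil => exact base_case
    | cons a rest =>
      rw [obp]
      rw [Finset.sum_biUnion ?disj]
      case disj =>
        intro k hk k' hk' hne
        apply Finset.disjoint_left.2
        rintro x hx1 hx2
        obtain ⟨β1, _, rfl⟩ := Finset.mem_image.1 hx1
        obtain ⟨β2, _, heq⟩ := Finset.mem_image.1 hx2
        apply hne
        have hk1 : k.1 ≤ rest.length := by
          have := k.2; simp only [Finset.mem_range] at this; omega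
        have hk2 : k'.1 ≤ rest.length := by
          have := k'.2; simp only [Finset.mem_range] at this; omega
        rw [List.cons.injEq, List.cons.injEq] at heq
        have := congrArg List.length heq.1.2
        rw [List.length_take, List.length_take] at this
        exact Subtype.ext (by omega)
      have hinner : ∀ k ∈ (Finset.range (rest.length + 1)).attach,
          (∑ x ∈ (obp (rest.drop k.1)).image fun β => (a :: rest.take k.1) :: β,
            fprod (x.map sElem)) =
          fmul (sElem (a :: rest.take k.1))
            (∑ J ∈ coars (rest.drop k.1).reverse, sElem J) := by
        intro k _
        rw [Finset.sum_image (fun x _ y _ h => by simpa using h)]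
        have : ∀ β ∈ obp (rest.drop k.1),
            fprod (((a :: rest.take k.1) :: β).map sElem) =
            fmul (sElem (a :: rest.take k.1)) (fprod (β.map sElem)) := by
          intro β _
          rw [List.map_cons, fprod]
        rw [Finset.sum_congr rfl this, ← fmul_sum_right,
          ih (rest.drop k.1)
            (by rw [List.length_drop]; simp only [List.length_cons] at hlen; omega)
            (fun i hi => hpos i (List.mem_cons_of_mem a (List.mem_of_mem_drop hi)))]
      rw [Finset.sum_congr rfl hinner, Finset.sum_attach (Finset.range (rest.length + 1))
        (fun k => fmul (sElem (a :: rest.take k))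
          (∑ J ∈ coars (rest.drop k).reverse, sElem J))]
      -- now reduce to the key lemma
      have hkey := keyLemma' (a :: rest) (by simp)
        (fun i hi => hpos i hi)
      set T : ℕ → F2D := fun j => fmul (sElem ((a :: rest).take j))
        (∑ J ∈ coars ((a :: rest).drop j).reverse, sElem J) with hT
      have hTkey : ∑ j ∈ Finset.range ((a :: rest).length + 1), T j = 0 := by
        rw [hT]
        have : ∀ j ∈ Finset.range ((a :: rest).length + 1),
            fmul (sElem ((a :: rest).take j))
              (∑ J ∈ coars ((a :: rest).drop j).reverse, sElem J) =
            ∑ J ∈ coars ((a :: rest).drop j).reverse,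
              ofMS (osp ((a :: rest).take j) J) := by
          intro j _
          rw [fmul_sum_right]
          exact Finset.sum_congr rfl fun J _ => fmul_sElem_sElem _ _
        rw [Finset.sum_congr rfl this]
        exact hkey
      have hT0 : T 0 = ∑ I' ∈ coars (a :: rest).reverse, sElem I' := by
        rw [hT]
        simp only [List.take_zero, List.drop_zero]
        exact fmul_one_left _
      have hTsucc : ∀ k, T (k + 1) = fmul (sElem (a :: rest.take k))
          (∑ J ∈ coars (rest.drop k).reverse, sElem J) := by
        intro k
        rw [hT]
        simp only [List.take_succ_cons, List.drop_succ_cons]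
      rw [show (a :: rest).length + 1 = ((a :: rest).length) + 1 from rfl,
        Finset.sum_range_succ'] at hTkey
      have : ∑ j ∈ Finset.range (a :: rest).length, T (j + 1) = T 0 := by
        have := hTkey
        have h2 : T 0 = -(∑ j ∈ Finset.range (a :: rest).length, T (j + 1)) :=
          eq_neg_of_add_eq_zero_right hTkey
        rw [h2, neg_eq_of_add_eq_zero_left (char_two _)]
      rw [← hT0, ← this]
      simp only [List.length_cons]
      exact (Finset.sum_congr rfl fun k _ => (hTsucc k).symm)

/-- For every nonempty sequence `I` of positive integers, in `𝓕₂*` one has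
`Σ_{I' ∈ C(I⁻¹)} S_{I'} = Σ_{β ∈ P(I)} S_{β(1)} · S_{β(2)} ⋯ S_{β(l(β))}`
(both sides equal the conjugation `χ(S_I)`). -/
theorem coars_eq_blockPartitions (I : List ℕ) (hI : I ≠ []) (hpos : ∀ i ∈ I, 0 < i) :
    ∑ I' ∈ coars I.reverse, sElem I' = ∑ β ∈ obp I, fprod (β.map sElem) :=
  mainAux I.length I le_rfl hpos
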